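/- Let α be an irrational number in (0,1), let C : ℕ⁺ → ℚ satisfy |C(n) − α| < 1/n for all n, and let q ∈ ℚ. Then there exists n with |C(n) − q| > 1/n, and for the least such n: if q < C(n) then q < α, and if q > C(n) then q > α. -/
import Mathlib


/-- If `C` is a Cauchy sequence for an irrational `α ∈ (0,1)` and
`q ∈ ℚ`, then there is `n ≥ 1` with `|C(n) - q| > 1/n`, and for the least such `n`:
if `q < C(n)` then `q < α`, and if `q > C(n)` then `q > α`. -/
theorem cauchy_to_dedekind (α : ℝ) (hirr : Irrational α) (h0 : 0 < α) (h1 : α < 1)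
    (C : ℕ → ℚ) (hC : ∀ n : ℕ, 1 ≤ n → |(C n : ℝ) - α| < 1 / n) (q : ℚ) :
    ∃ n : ℕ, 1 ≤ n ∧ 1 / (n : ℚ) < |C n - q| ∧
      (∀ m : ℕ, 1 ≤ m → m < n → ¬(1 / (m : ℚ) < |C m - q|)) ∧
      (q < C n → (q : ℝ) < α) ∧ (C n < q → α < (q : ℝ)) := by
  have hqα : (q : ℝ) ≠ α := fun h => hirr ⟨q, h⟩
  have hε : 0 < |(q : ℝ) - α| := abs_pos.mpr (sub_ne_zero.mpr hqα)
  obtain ⟨k, hk⟩ := exists_nat_one_div_lt (half_pos hε)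
  have hex : ∃ m : ℕ, 1 ≤ m ∧ 1 / (m : ℚ) < |C m - q| := by
    refine ⟨k + 1, Nat.le_add_left 1 k, ?_⟩
    have h1 : |(C (k + 1) : ℝ) - α| < 1 / ((k + 1 : ℕ) : ℝ) := hC (k + 1) (Nat.le_add_left 1 k)
    push_cast at h1
    have h2 : (1 : ℝ) / (k + 1) < |(q : ℝ) - α| / 2 := by exact_mod_cast hk
    have htri : |(q : ℝ) - α| ≤ |(q : ℝ) - C (k + 1)| + |(C (k + 1) : ℝ) - α| :=
      abs_sub_le _ _ _
    have hcomm : |(q : ℝ) - C (k + 1)| = |(C (k + 1) : ℝ) - q| := abs_sub_comm _ _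
    have key : (1 : ℝ) / ((k + 1 : ℕ) : ℝ) < |(C (k + 1) : ℝ) - q| := by
      push_cast
      rw [hcomm] at htri
      linarith
    have : (1 : ℝ) / ((k + 1 : ℕ) : ℝ) < |((C (k + 1) - q : ℚ) : ℝ)| := by
      push_cast; push_cast at key; linarith
    rw [← Rat.cast_lt (K := ℝ)]
    push_cast
    push_cast at this
    linarith
  classical
  set n := Nat.find hex with hn
  obtain ⟨hn1, hnabs⟩ := Nat.find_spec hex
  refine ⟨n, hn1, hnabs, ?_, ?_, ?_⟩
  · intro m hm1 hmn habs
    exact Nat.find_min hex hmn ⟨hm1, habs⟩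
  · intro hlt
    by_contra hle
    push_neg at hle
    have hCα : |(C n : ℝ) - α| < 1 / n := hC n hn1
    have h1 : (C n : ℝ) - α < 1 / n := (abs_lt.mp hCα).2
    have h2 : (1 : ℚ) / n < C n - q := by
      rwa [abs_of_pos (by linarith)] at hnabs
    have h2' : (1 : ℝ) / n < (C n : ℝ) - q := by
      rw [← Rat.cast_lt (K := ℝ)] at h2; push_cast at h2; linarith
    linarith
  · intro hlt
    by_contra hle
    push_neg at hle
    have hCα : |(C n : ℝ) - α| < 1 / n := hC n hn1
    have h1 : -(1 / (n : ℝ)) < (C n : ℝ) - α := (abs_lt.mp hCα).1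
    have h2 : (1 : ℚ) / n < q - C n := by
      rw [abs_of_neg (by linarith)] at hnabs
      linarith
    have h2' : (1 : ℝ) / n < (q : ℝ) - C n := by
      rw [← Rat.cast_lt (K := ℝ)] at h2; push_cast at h2; linarith
    linarith
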